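/- Let f_t(λ, μ) = exp_φ(t·log_φ(λ) + μ) for t > 0, λ > 0, μ ∈ ℝ. If 0 < t ≤ 1 and μ + 2(1-t) + t·log 2 ≥ 0, then (t/2)·λ ≤ f_t(λ, μ). -/
import Mathlib

lemma logphi_mono (a b : ℝ) (ha : 0 < a) (hb : 0 < b)
    (h : a - 1 + Real.log a ≤ b - 1 + Real.log b) : a ≤ b := by
  by_contra hlt
  push_neg at hlt
  have := Real.log_lt_log hb hlt
  linarith

lemma key_ineq (t l : ℝ) (ht : 0 < t) (ht1 : t ≤ 1) (hl : 0 < l) :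
    0 ≤ t * l / 2 + (t - 1) * Real.log l - (1 - t) - Real.log t
        + (1 - t) * Real.log 2 := by
  rcases eq_or_lt_of_le ht1 with h1 | h1
  · subst h1
    simp [Real.log_one]
    linarith
  · set c : ℝ := 2 * (1 - t) / t with hc
    have h1t : 0 < 1 - t := by linarith
    have hcpos : 0 < c := by positivity
    have hlog : Real.log l ≤ l / c + Real.log c - 1 := by
      have h2 : Real.log (l / c) ≤ l / c - 1 :=
        Real.log_le_sub_one_of_pos (by positivity)
      rw [Real.log_div (ne_of_gt hl) (ne_of_gt hcpos)] at h2
      linarith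
    have h3 : (t - 1) * (l / c + Real.log c - 1) ≤ (t - 1) * Real.log l :=
      mul_le_mul_of_nonpos_left hlog (by linarith)
    have hlogc : Real.log c = Real.log 2 + Real.log (1 - t) - Real.log t := by
      rw [hc, Real.log_div (by positivity) (ne_of_gt ht),
        Real.log_mul (by norm_num) (ne_of_gt h1t)]
    have hcancel : t * l / 2 + (t - 1) * (l / c) = 0 := by
      rw [hc]
      field_simp
      ring
    have hlt0 : Real.log t ≤ 0 := Real.log_nonpos (le_of_lt ht) (le_of_lt h1)
    have hl1t : Real.log (1 - t) ≤ 0 := Real.log_nonpos (le_of_lt h1t) (by linarith)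
    have hprod : 0 ≤ (t - 1) * Real.log (1 - t) :=
      by
      have := mul_nonneg (neg_nonneg.2 (show t - 1 ≤ 0 by linarith)) (neg_nonneg.2 hl1t)
      nlinarith
    have hprod2 : 0 ≤ -(t * Real.log t) := by nlinarith
    nlinarith [h3, hcancel]

theorem ft_lower_bound (expφ : ℝ → ℝ) (hpos : ∀ u, 0 < expφ u)
    (hinv : ∀ u, expφ u - 1 + Real.log (expφ u) = u) :
    ∀ t l μ : ℝ, 0 < t → t ≤ 1 → 0 < l →
      0 ≤ μ + 2 * (1 - t) + t * Real.log 2 →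
      t / 2 * l ≤ expφ (t * (l - 1 + Real.log l) + μ) := by
  intro t l μ ht ht1 hl hμ
  set u : ℝ := t * (l - 1 + Real.log l) + μ with hu
  have ha : (0:ℝ) < t / 2 * l := by positivity
  apply logphi_mono _ _ ha (hpos u)
  rw [hinv u]
  have hlog : Real.log (t / 2 * l) = Real.log t - Real.log 2 + Real.log l := by
    rw [Real.log_mul (by positivity) (ne_of_gt hl),
      Real.log_div (ne_of_gt ht) (by norm_num)]
  rw [hlog, hu]
  have := key_ineq t l ht ht1 hl
  nlinarith
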